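/- Fix t > 0 and let J = min{i : X_i > t} (almost surely finite). Then the vector threshold estimator ρ̂ = Y_J / s(t) ∈ ℝ^d is unbiased, E[ρ̂] = ρ, and its covariance matrix is Cov(ρ̂) = (1/s²(t)) · ( A Aᵀ + Var(X_J) · ρ ρᵀ ), where Var(X_J) = 1 + t·s(t) − s²(t). In particular tr Cov(ρ̂) = (1/s²(t)) · ( tr(A Aᵀ) + (1 + t·s(t) − s²(t)) · ‖ρ‖² ). -/

import Mathlib

set_option autoImplicit false

open MeasureTheory ProbabilityTheory Matrix

open Real Filter Set Topology ENNReal NNReal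

set_option maxHeartbeats 1000000 in
/-- The standard normal density `φ(x) = e^{-x²/2} / √(2π)`. -/
noncomputable def stdGaussianPDF (x : ℝ) : ℝ := Real.exp (-x ^ 2 / 2) / Real.sqrt (2 * Real.pi)

/-- The standard normal tail `Q(x) = ∫ₓ^∞ φ(u) du`. -/
noncomputable def gaussTail (x : ℝ) : ℝ := ∫ u in Set.Ioi x, stdGaussianPDF u

/-- The inverse Mills ratio `s(t) = φ(t)/Q(t)`. -/
noncomputable def invMills (t : ℝ) : ℝ := stdGaussianPDF t / gaussTail t

lemma neg_half_sq (x : ℝ) : -(2⁻¹ * x ^ 2) = -x ^ 2 / 2 := by ring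
lemma neg_half_sq' (x : ℝ) : -(1/2) * x ^ 2 = -x ^ 2 / 2 := by ring

lemma phi_eq (x : ℝ) : stdGaussianPDF x = gaussianPDFReal 0 1 x := by
  simp [stdGaussianPDF, gaussianPDFReal, div_eq_inv_mul, mul_comm]

lemma phi_pos (x : ℝ) : 0 < stdGaussianPDF x := by
  rw [phi_eq]; exact gaussianPDFReal_pos _ _ _ one_ne_zero

lemma phi_nonneg (x : ℝ) : 0 ≤ stdGaussianPDF x := (phi_pos x).le

lemma phi_cont : Continuous stdGaussianPDF := by
  unfold stdGaussianPDF; fun_prop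

lemma hasDerivAt_phi (x : ℝ) : HasDerivAt stdGaussianPDF (-x * stdGaussianPDF x) x := by
  have h1 : HasDerivAt (fun y : ℝ => -y ^ 2 / 2) (-x) x := by
    have := ((hasDerivAt_pow 2 x).neg).div_const 2
    refine this.congr_deriv ?_
    simp; ring
  have h2 := (h1.exp).div_const (Real.sqrt (2 * Real.pi))
  refine h2.congr_deriv ?_
  simp [stdGaussianPDF]; ring

lemma hasDerivAt_negphi (x : ℝ) :
    HasDerivAt (fun y => -stdGaussianPDF y) (x * stdGaussianPDF x) x := by
  exact (hasDerivAt_phi x).neg.congr_deriv (by ring)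

lemma hasDerivAt_negxphi (x : ℝ) :
    HasDerivAt (fun y => -(y * stdGaussianPDF y))
      (x ^ 2 * stdGaussianPDF x - stdGaussianPDF x) x := by
  have := ((hasDerivAt_id x).mul (hasDerivAt_phi x)).neg
  refine this.congr_deriv ?_
  simp [id]; ring

lemma int_phi : Integrable stdGaussianPDF := by
  have := (integrable_exp_neg_mul_sq (by norm_num : (0:ℝ) < 1/2)).div_const
    (Real.sqrt (2 * Real.pi))
  refine this.congr (Filter.EventuallyEq.of_eq (funext fun x => ?_))
  simp only [stdGaussianPDF, neg_half_sq']

lemma int_xphi : Integrable (fun x => x * stdGaussianPDF x) := by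
  have := (integrable_mul_exp_neg_mul_sq (by norm_num : (0:ℝ) < 1/2)).div_const
    (Real.sqrt (2 * Real.pi))
  refine this.congr (Filter.EventuallyEq.of_eq (funext fun x => ?_))
  simp only [stdGaussianPDF, neg_half_sq', mul_div_assoc]

lemma int_x2phi : Integrable (fun x => x ^ 2 * stdGaussianPDF x) := by
  have h := (integrable_rpow_mul_exp_neg_mul_sq (by norm_num : (0:ℝ) < 1/2)
    (by norm_num : (-1:ℝ) < 2)).div_const (Real.sqrt (2 * Real.pi))
  have h2 : ∀ x : ℝ, x ^ (2:ℝ) = x ^ (2:ℕ) := fun x => by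
    rw [show ((2:ℝ) = ((2:ℕ):ℝ)) by norm_num, Real.rpow_natCast]
  refine h.congr (Filter.EventuallyEq.of_eq (funext fun x => ?_))
  simp only [stdGaussianPDF, neg_half_sq', h2, mul_div_assoc]

lemma tendsto_exp_half : Tendsto (fun x : ℝ => Real.exp (-(1/2) * x)) atTop (𝓝 0) := by
  have h1 : Tendsto (fun x : ℝ => (1/2) * x) atTop atTop :=
    tendsto_id.const_mul_atTop (by norm_num)
  have h2 := tendsto_neg_atTop_atBot.comp h1
  have h3 : Tendsto (fun x : ℝ => -(1/2) * x) atTop atBot :=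
    Filter.Tendsto.congr (fun x => by simp [Function.comp, neg_mul]) h2
  exact Real.tendsto_exp_atBot.comp h3

lemma tendsto_phi_top : Tendsto stdGaussianPDF atTop (𝓝 0) := by
  have h := (exp_neg_mul_sq_isLittleO_exp_neg (by norm_num : (0:ℝ) < 1/2)).isBigO.trans_tendsto
    tendsto_exp_neg_atTop_nhds_zero
  have h2 := h.div_const (Real.sqrt (2 * Real.pi))
  rw [zero_div] at h2
  refine Filter.Tendsto.congr (fun x => ?_) h2
  simp only [stdGaussianPDF, neg_half_sq']

lemma tendsto_xphi_top : Tendsto (fun x => x * stdGaussianPDF x) atTop (𝓝 0) := by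
  have h := (rpow_mul_exp_neg_mul_sq_isLittleO_exp_neg (by norm_num : (0:ℝ) < 1/2)
    1).isBigO.trans_tendsto tendsto_exp_half
  have h2 := h.div_const (Real.sqrt (2 * Real.pi))
  rw [zero_div] at h2
  refine Filter.Tendsto.congr (fun x => ?_) h2
  simp only [stdGaussianPDF, Real.rpow_one, neg_half_sq', mul_div_assoc]

lemma tendsto_phi_bot : Tendsto stdGaussianPDF atBot (𝓝 0) := by
  have h := tendsto_phi_top.comp tendsto_neg_atBot_atTop
  have : ∀ x : ℝ, stdGaussianPDF (-x) = stdGaussianPDF x := fun x => by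
    simp [stdGaussianPDF]
  exact Filter.Tendsto.congr (fun x => by simp [Function.comp, this]) h

lemma tendsto_xphi_bot : Tendsto (fun x => x * stdGaussianPDF x) atBot (𝓝 0) := by
  have h := (tendsto_xphi_top.comp tendsto_neg_atBot_atTop).neg
  rw [neg_zero] at h
  have : ∀ x : ℝ, stdGaussianPDF (-x) = stdGaussianPDF x := fun x => by
    simp [stdGaussianPDF]
  exact Filter.Tendsto.congr (fun x => by simp [Function.comp, this]) h

-- truncated first moment
lemma L1 (t : ℝ) : ∫ x in Set.Ioi t, x * stdGaussianPDF x = stdGaussianPDF t := by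
  have := integral_Ioi_of_hasDerivAt_of_tendsto' (a := t)
    (f := fun y => -stdGaussianPDF y) (f' := fun x => x * stdGaussianPDF x)
    (fun x _ => hasDerivAt_negphi x) int_xphi.integrableOn tendsto_phi_top.neg
  simpa using this

lemma L2 (t : ℝ) :
    ∫ x in Set.Ioi t, x ^ 2 * stdGaussianPDF x = t * stdGaussianPDF t + gaussTail t := by
  have h := integral_Ioi_of_hasDerivAt_of_tendsto' (a := t)
    (f := fun y => -(y * stdGaussianPDF y))
    (f' := fun x => x ^ 2 * stdGaussianPDF x - stdGaussianPDF x)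
    (fun x _ => hasDerivAt_negxphi x)
    (int_x2phi.sub int_phi).integrableOn tendsto_xphi_top.neg
  rw [integral_sub int_x2phi.integrableOn int_phi.integrableOn] at h
  simp only [neg_zero, neg_neg, zero_sub, sub_neg_eq_add] at h
  have : (∫ x in Set.Ioi t, stdGaussianPDF x) = gaussTail t := rfl
  linarith [h, this]

lemma F0 : ∫ x, stdGaussianPDF x = 1 := by
  rw [show stdGaussianPDF = gaussianPDFReal 0 1 from funext phi_eq]
  exact integral_gaussianPDFReal_eq_one 0 one_ne_zero

lemma F1 : ∫ x, x * stdGaussianPDF x = 0 := by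
  have := integral_of_hasDerivAt_of_tendsto
    (f := fun y => -stdGaussianPDF y) (f' := fun x => x * stdGaussianPDF x)
    (fun x => hasDerivAt_negphi x) int_xphi tendsto_phi_bot.neg tendsto_phi_top.neg
  simpa using this

lemma F2 : ∫ x, x ^ 2 * stdGaussianPDF x = 1 := by
  have h := integral_of_hasDerivAt_of_tendsto
    (f := fun y => -(y * stdGaussianPDF y))
    (f' := fun x => x ^ 2 * stdGaussianPDF x - stdGaussianPDF x)
    (fun x => hasDerivAt_negxphi x) (int_x2phi.sub int_phi)
    tendsto_xphi_bot.neg tendsto_xphi_top.neg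
  rw [integral_sub int_x2phi int_phi, F0] at h
  simp only [neg_zero, sub_zero] at h
  linarith

lemma gaussTail_pos (t : ℝ) : 0 < gaussTail t := by
  rw [gaussTail]
  rw [setIntegral_pos_iff_support_of_nonneg_ae
    (Filter.Eventually.of_forall fun x => phi_nonneg x) int_phi.integrableOn]
  have : Function.support stdGaussianPDF = Set.univ := by
    ext x; simp [Function.mem_support, (phi_pos x).ne']
  rw [this]
  simp

lemma gauss_eq :
    gaussianReal 0 1 = volume.withDensity fun x => ENNReal.ofReal (stdGaussianPDF x) := by
  rw [gaussianReal_of_var_ne_zero 0 one_ne_zero]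
  congr 1
  funext x
  rw [gaussianPDF, ← phi_eq]

lemma gauss_restrict_apply {s : Set ℝ} (hs : MeasurableSet s) :
    gaussianReal 0 1 s = ENNReal.ofReal (∫ x in s, stdGaussianPDF x) := by
  rw [gaussianReal_apply_eq_integral 0 one_ne_zero s]
  congr 1
  exact integral_congr_ae (Filter.Eventually.of_forall fun x => (phi_eq x).symm)

lemma integral_gauss_restrict (s : Set ℝ) (hs : MeasurableSet s) (f : ℝ → ℝ) :
    ∫ x, f x ∂((gaussianReal 0 1).restrict s) = ∫ x in s, stdGaussianPDF x * f x := by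
  rw [gauss_eq]
  rw [restrict_withDensity hs]
  have : (fun x => ENNReal.ofReal (stdGaussianPDF x))
      = fun x => ((fun y => (stdGaussianPDF y).toNNReal) x : ℝ≥0∞) := rfl
  rw [this, integral_withDensity_eq_integral_smul
    (phi_cont.measurable.real_toNNReal) f]
  refine integral_congr_ae (Filter.Eventually.of_forall fun x => ?_)
  simp [NNReal.smul_def, Real.coe_toNNReal _ (phi_nonneg x)]

lemma integrable_gauss_restrict (s : Set ℝ) (hs : MeasurableSet s) (f : ℝ → ℝ) :
    Integrable f ((gaussianReal 0 1).restrict s)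
      ↔ IntegrableOn (fun x => stdGaussianPDF x * f x) s := by
  rw [gauss_eq, restrict_withDensity hs]
  have : (fun x => ENNReal.ofReal (stdGaussianPDF x))
      = fun x => ((fun y => (stdGaussianPDF y).toNNReal) x : ℝ≥0∞) := rfl
  rw [this, integrable_withDensity_iff_integrable_smul (phi_cont.measurable.real_toNNReal)]
  constructor <;> intro h <;> refine h.congr (Filter.Eventually.of_forall fun x => ?_) <;>
    simp [NNReal.smul_def, Real.coe_toNNReal _ (phi_nonneg x)]

lemma integral_gauss (f : ℝ → ℝ) :
    ∫ x, f x ∂(gaussianReal 0 1) = ∫ x, stdGaussianPDF x * f x := by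
  have := integral_gauss_restrict Set.univ MeasurableSet.univ f
  simpa using this

lemma L1' (t : ℝ) : ∫ x in Set.Ioi t, stdGaussianPDF x * x = stdGaussianPDF t := by
  rw [← L1 t]
  exact integral_congr_ae (Filter.Eventually.of_forall fun x => mul_comm _ _)

lemma L2' (t : ℝ) :
    ∫ x in Set.Ioi t, stdGaussianPDF x * x ^ 2 = t * stdGaussianPDF t + gaussTail t := by
  rw [← L2 t]
  exact integral_congr_ae (Filter.Eventually.of_forall fun x => mul_comm _ _)

lemma L0' (t : ℝ) : ∫ x in Set.Ioi t, stdGaussianPDF x * 1 = gaussTail t := by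
  simp only [mul_one]; rfl

lemma intOn_xphi (t : ℝ) : IntegrableOn (fun x => stdGaussianPDF x * x) (Set.Ioi t) :=
  (int_xphi.congr (Filter.Eventually.of_forall fun x => mul_comm _ _)).integrableOn

lemma intOn_x2phi (t : ℝ) : IntegrableOn (fun x => stdGaussianPDF x * x ^ 2) (Set.Ioi t) :=
  (int_x2phi.congr (Filter.Eventually.of_forall fun x => mul_comm _ _)).integrableOn

lemma integrable_gauss (f : ℝ → ℝ) :
    Integrable f (gaussianReal 0 1) ↔ Integrable (fun x => stdGaussianPDF x * f x) := by
  have h := integrable_gauss_restrict Set.univ MeasurableSet.univ f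
  rwa [Measure.restrict_univ, integrableOn_univ] at h

lemma int_id_gauss : Integrable (fun x => x) (gaussianReal 0 1) :=
  (integrable_gauss _).2 (int_xphi.congr (Filter.Eventually.of_forall fun x => mul_comm _ _))

lemma int_sq_gauss : Integrable (fun x => x ^ 2) (gaussianReal 0 1) :=
  (integrable_gauss _).2 (int_x2phi.congr (Filter.Eventually.of_forall fun x => mul_comm _ _))

lemma F0' : ∫ x, x ∂(gaussianReal 0 1) = 0 := by
  rw [integral_gauss (fun x => x)]
  rw [← F1]
  exact integral_congr_ae (Filter.Eventually.of_forall fun x => mul_comm _ _)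

lemma F2' : ∫ x, x ^ 2 ∂(gaussianReal 0 1) = 1 := by
  rw [integral_gauss (fun x => x ^ 2)]
  rw [← F2]
  exact integral_congr_ae (Filter.Eventually.of_forall fun x => mul_comm _ _)

section pi
variable {d : ℕ}

lemma pi_integral_prod (f : Fin d → ℝ → ℝ) :
    ∫ z : Fin d → ℝ, ∏ i, f i (z i) ∂(Measure.pi fun _ : Fin d => gaussianReal 0 1)
      = ∏ i, ∫ x, f i x ∂(gaussianReal 0 1) := by
  have := MeasureTheory.integral_fintype_prod_eq_prod (ι := Fin d) (E := fun _ => ℝ) f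
    (μ := fun _ => gaussianReal 0 1)
  exact this

lemma pi_integrable_prod (f : Fin d → ℝ → ℝ)
    (hf : ∀ i, Integrable (f i) (gaussianReal 0 1)) :
    Integrable (fun z : Fin d → ℝ => ∏ i, f i (z i))
      (Measure.pi fun _ : Fin d => gaussianReal 0 1) := by
  have := MeasureTheory.Integrable.fintype_prod (ι := Fin d) (f := f)
    (μ := fun _ => gaussianReal 0 1) (fun i => hf i)
  exact this

lemma coord_single (k : Fin d) (g : ℝ → ℝ) :
    ∀ z : Fin d → ℝ, (∏ i, (if i = k then g else fun _ => (1:ℝ)) (z i)) = g (z k) := by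
  intro z
  rw [show (∏ i, (if i = k then g else fun _ => (1:ℝ)) (z i))
      = ∏ i, (if i = k then g (z i) else 1) from
    Finset.prod_congr rfl fun i _ => by by_cases h : i = k <;> simp [h]]
  simp [Finset.prod_ite_eq']

lemma u0 (k : Fin d) :
    ∫ z : Fin d → ℝ, z k ∂(Measure.pi fun _ : Fin d => gaussianReal 0 1) = 0 := by
  have h := pi_integral_prod (fun i => if i = k then (fun x => x) else fun _ => (1:ℝ))
  rw [show (∫ z : Fin d → ℝ, z k ∂(Measure.pi fun _ : Fin d => gaussianReal 0 1))
    = ∫ z : Fin d → ℝ, ∏ i, (if i = k then (fun x : ℝ => x) else fun _ => (1:ℝ)) (z i)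
      ∂(Measure.pi fun _ : Fin d => gaussianReal 0 1) from
    (integral_congr_ae (Filter.Eventually.of_forall fun z =>
      (coord_single k (fun x : ℝ => x) z).symm)), h]
  apply Finset.prod_eq_zero (Finset.mem_univ k)
  simp [F0']

lemma uInt (k : Fin d) :
    Integrable (fun z : Fin d → ℝ => z k) (Measure.pi fun _ : Fin d => gaussianReal 0 1) := by
  have h := pi_integrable_prod (fun i => if i = k then (fun x => x) else fun _ => (1:ℝ))
    (fun i => by by_cases hik : i = k <;> simp [hik, int_id_gauss, integrable_const])
  exact h.congr (Filter.Eventually.of_forall fun z => coord_single k (fun x : ℝ => x) z)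

lemma coord_pair {k l : Fin d} (hkl : k ≠ l) :
    ∀ z : Fin d → ℝ,
      (∏ i, (if i = k then (fun x : ℝ => x) else if i = l then (fun x : ℝ => x)
        else fun _ => (1:ℝ)) (z i)) = z k * z l := by
  intro z
  rw [show (∏ i, (if i = k then (fun x : ℝ => x) else if i = l then (fun x : ℝ => x)
        else fun _ => (1:ℝ)) (z i))
      = ∏ i, (if i = k then z i else if i = l then z i else 1) from
    Finset.prod_congr rfl fun i _ => by
      by_cases h : i = k
      · simp [h]
      · by_cases h' : i = l <;> simp [h, h']]
  rw [← Finset.prod_subset (Finset.subset_univ {k, l})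
    (fun i _ hi => by
      simp only [Finset.mem_insert, Finset.mem_singleton, not_or] at hi
      simp [hi.1, hi.2])]
  rw [Finset.prod_insert (by simp [hkl])]
  simp [hkl, hkl.symm]

lemma u2 (k l : Fin d) :
    ∫ z : Fin d → ℝ, z k * z l ∂(Measure.pi fun _ : Fin d => gaussianReal 0 1)
      = if k = l then 1 else 0 := by
  by_cases hkl : k = l
  · subst hkl
    simp only [if_pos rfl]
    have h := pi_integral_prod (fun i => if i = k then (fun x => x ^ 2) else fun _ => (1:ℝ))
    rw [show (∫ z : Fin d → ℝ, z k * z k ∂(Measure.pi fun _ : Fin d => gaussianReal 0 1))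
      = ∫ z : Fin d → ℝ, ∏ i, (if i = k then (fun x : ℝ => x ^ 2) else fun _ => (1:ℝ)) (z i)
        ∂(Measure.pi fun _ : Fin d => gaussianReal 0 1) from
      integral_congr_ae (Filter.Eventually.of_forall fun z => by
        show z k * z k
          = ∏ i, (if i = k then (fun x : ℝ => x ^ 2) else fun _ => (1:ℝ)) (z i)
        rw [coord_single k (fun x : ℝ => x ^ 2) z]; ring), h]
    rw [Finset.prod_eq_single k (fun i _ hik => by simp [hik]) (by simp)]
    simp [F2']
  · simp only [if_neg hkl]
    have h := pi_integral_prod (fun i => if i = k then (fun x : ℝ => x) else if i = l then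
      (fun x : ℝ => x) else fun _ => (1:ℝ))
    rw [show (∫ z : Fin d → ℝ, z k * z l ∂(Measure.pi fun _ : Fin d => gaussianReal 0 1))
      = ∫ z : Fin d → ℝ, ∏ i, (if i = k then (fun x : ℝ => x) else if i = l then
          (fun x : ℝ => x) else fun _ => (1:ℝ)) (z i)
        ∂(Measure.pi fun _ : Fin d => gaussianReal 0 1) from
      integral_congr_ae (Filter.Eventually.of_forall fun z => (coord_pair hkl z).symm), h]
    apply Finset.prod_eq_zero (Finset.mem_univ k)
    simp [F0']

lemma uInt2 (k l : Fin d) :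
    Integrable (fun z : Fin d → ℝ => z k * z l)
      (Measure.pi fun _ : Fin d => gaussianReal 0 1) := by
  by_cases hkl : k = l
  · subst hkl
    have h := pi_integrable_prod (fun i => if i = k then (fun x => x ^ 2) else fun _ => (1:ℝ))
      (fun i => by by_cases hik : i = k <;> simp [hik, int_sq_gauss, integrable_const])
    refine h.congr (Filter.Eventually.of_forall fun z => ?_)
    show (∏ i, (if i = k then (fun x : ℝ => x ^ 2) else fun _ => (1:ℝ)) (z i)) = z k * z k
    rw [coord_single k (fun x : ℝ => x ^ 2) z]; ring
  · have h := pi_integrable_prod (fun i => if i = k then (fun x : ℝ => x) else if i = l then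
      (fun x : ℝ => x) else fun _ => (1:ℝ))
      (fun i => by
        by_cases hik : i = k
        · simp [hik, int_id_gauss]
        · by_cases hil : i = l <;> simp [hik, hil, int_id_gauss, integrable_const])
    exact h.congr (Filter.Eventually.of_forall fun z => coord_pair hkl z)
end pi

lemma stopped_law {Ω : Type*} [MeasureSpace Ω] [IsProbabilityMeasure (ℙ : Measure Ω)]
    {E : Type*} [MeasurableSpace E] (W : ℕ → Ω → E) (μ : Measure E) [IsProbabilityMeasure μ]
    (hindep : iIndepFun W ℙ)
    (hWm : ∀ i, AEMeasurable (W i) ℙ)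
    (hlaw : ∀ i, Measure.map (W i) ℙ = μ)
    (W' : ℕ → Ω → E) (hW'm : ∀ i, Measurable (W' i)) (hWW' : ∀ i, W i =ᵐ[ℙ] W' i)
    (B : Set E) (hB : MeasurableSet B)
    (J : Ω → ℕ) (hJmeas : Measurable J)
    (hJ : ∀ᵐ ω ∂ℙ, W (J ω) ω ∈ B ∧ ∀ i < J ω, W i ω ∉ B) :
    Measure.map (fun ω => W' (J ω) ω) ℙ = (μ B)⁻¹ • μ.restrict B := by
  have hVm : Measurable (fun ω => W' (J ω) ω) := by
    have h1 : Measurable (fun p : Ω × ℕ => W' p.2 p.1) :=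
      measurable_from_prod_countable_left (fun j => hW'm j)
    exact h1.comp (measurable_id.prodMk hJmeas)
  have hG : ∀ᵐ ω ∂ℙ, (W (J ω) ω ∈ B ∧ ∀ i < J ω, W i ω ∉ B) ∧ ∀ i, W i ω = W' i ω :=
    hJ.and (ae_all_iff.2 fun i => hWW' i)
  ext s hs
  rw [Measure.map_apply hVm hs, Measure.smul_apply, Measure.restrict_apply hs, smul_eq_mul]
  -- decompose by the value of J
  have hdecomp : (fun ω => W' (J ω) ω) ⁻¹' s
      = ⋃ j, ((fun ω => W' (J ω) ω) ⁻¹' s ∩ J ⁻¹' {j}) := by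
    ext ω; simp
  rw [hdecomp, measure_iUnion
    (fun j j' hjj' => Set.disjoint_left.2 (by
      rintro ω ⟨-, hj⟩ ⟨-, hj'⟩
      simp only [Set.mem_preimage, Set.mem_singleton_iff] at hj hj'
      exact hjj' (hj ▸ hj'.symm ▸ rfl)))
    (fun j => (hVm hs).inter (hJmeas (measurableSet_singleton j)))]
  -- compute each term
  set C : ℕ → ℕ → Set E := fun j i => if i = j then s ∩ B else Bᶜ with hC
  have hCmeas : ∀ j i, MeasurableSet (C j i) := by
    intro j i
    by_cases h : i = j <;> simp [hC, h, hs.inter hB, hB.compl]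
  have hterm : ∀ j, ℙ ((fun ω => W' (J ω) ω) ⁻¹' s ∩ J ⁻¹' {j})
      = μ (s ∩ B) * (μ Bᶜ) ^ j := by
    intro j
    have hae : ∀ᵐ ω ∂ℙ, (ω ∈ ((fun ω => W' (J ω) ω) ⁻¹' s ∩ J ⁻¹' {j})
        ↔ ω ∈ (⋂ i ∈ Finset.range (j+1), W i ⁻¹' (C j i) : Set Ω)) := by
      filter_upwards [hG] with ω hω
      obtain ⟨⟨h1, h2⟩, h3⟩ := hω
      simp only [Set.mem_inter_iff, Set.mem_preimage, Set.mem_singleton_iff, Set.mem_iInter]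
      constructor
      · rintro ⟨hVs, rfl⟩
        intro i hi
        rw [Finset.mem_range, Nat.lt_succ_iff_lt_or_eq] at hi
        rcases hi with hi | rfl
        · simp only [hC, if_neg (Nat.ne_of_lt hi), Set.mem_compl_iff]
          exact h2 i hi
        · simp only [hC, if_pos rfl]
          refine ⟨?_, h1⟩
          rw [h3 (J ω)]
          exact hVs
      · intro hmem
        have hJj : J ω = j := by
          rcases lt_trichotomy (J ω) j with hlt | heq | hgt
          · have := hmem (J ω) (Finset.mem_range.2 (Nat.lt_succ_of_lt hlt))
            rw [hC] at this
            simp only [if_neg (Nat.ne_of_lt hlt), Set.mem_compl_iff] at this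
            exact absurd h1 this
          · exact heq
          · have := hmem j (Finset.mem_range.2 (Nat.lt_succ_self j))
            rw [hC] at this
            simp only [if_pos rfl] at this
            exact absurd this.2 (h2 j hgt)
        refine ⟨?_, hJj⟩
        have := hmem j (Finset.mem_range.2 (Nat.lt_succ_self j))
        rw [hC] at this
        simp only [if_pos rfl] at this
        rw [hJj, ← h3 j]
        exact this.1
    rw [measure_congr (Filter.eventuallyEq_set.2 hae)]
    rw [hindep.meas_biInter (fun i _ => ⟨C j i, hCmeas j i, rfl⟩)]
    have hWC : ∀ i, ℙ (W i ⁻¹' (C j i)) = μ (C j i) := fun i => by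
      rw [← hlaw i, Measure.map_apply_of_aemeasurable (hWm i) (hCmeas j i)]
    rw [Finset.prod_congr rfl (fun i _ => hWC i)]
    rw [Finset.range_add_one, Finset.prod_insert (by simp)]
    rw [show C j j = s ∩ B by simp [hC]]
    rw [Finset.prod_congr rfl (fun i hi => by
      rw [show C j i = Bᶜ by simp [hC, Nat.ne_of_lt (Finset.mem_range.1 hi)]])]
    rw [Finset.prod_const, Finset.card_range]
  rw [tsum_congr hterm, ENNReal.tsum_mul_left, ENNReal.tsum_geometric]
  have hsub : 1 - μ Bᶜ = μ B := by
    refine ENNReal.sub_eq_of_eq_add (measure_ne_top _ _) ?_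
    rw [← measure_union (disjoint_compl_right) hB.compl, Set.union_compl_self, measure_univ]
  rw [hsub, mul_comm]

/-- for the vector model `Yᵢ = ρ Xᵢ + A Zᵢ ∈ ℝᵈ` and `J = min{i : Xᵢ > t}`,
the vector threshold estimator `ρ̂ = Y_J / s(t)` is unbiased with covariance
`(1/s²(t)) (A Aᵀ + (1 + t s(t) - s²(t)) ρρᵀ)`; in particular
`tr Cov(ρ̂) = (1/s²(t)) (tr(A Aᵀ) + (1 + t s(t) - s²(t)) ‖ρ‖²)`. -/
theorem stmt8
    {Ω : Type*} [MeasureSpace Ω] [IsProbabilityMeasure (ℙ : Measure Ω)]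
    (d : ℕ) (hd : 1 ≤ d)
    (ρ : Fin d → ℝ) (A : Matrix (Fin d) (Fin d) ℝ)
    (X : ℕ → Ω → ℝ) (Z : ℕ → Ω → (Fin d → ℝ))
    (hindep : iIndepFun (fun i ω => (X i ω, Z i ω)) ℙ)
    (hlaw : ∀ i, Measure.map (fun ω => (X i ω, Z i ω)) ℙ
      = (gaussianReal 0 1).prod (Measure.pi fun _ : Fin d => gaussianReal 0 1))
    (Y : ℕ → Ω → Fin d → ℝ)
    (hY : ∀ i ω ℓ, Y i ω ℓ = ρ ℓ * X i ω + A.mulVec (Z i ω) ℓ)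
    (t : ℝ) (ht : 0 < t)
    (J : Ω → ℕ) (hJmeas : Measurable J)
    (hJ : ∀ᵐ ω ∂ℙ, t < X (J ω) ω ∧ ∀ i < J ω, X i ω ≤ t) :
    (∀ ℓ, (∫ ω, Y (J ω) ω ℓ / invMills t) = ρ ℓ) ∧
    (∀ ℓ m, (∫ ω, (Y (J ω) ω ℓ / invMills t) * (Y (J ω) ω m / invMills t))
          - (∫ ω, Y (J ω) ω ℓ / invMills t) * (∫ ω, Y (J ω) ω m / invMills t)
        = (1 / (invMills t) ^ 2)
            * ((A * Aᵀ) ℓ m + (1 + t * invMills t - (invMills t) ^ 2) * (ρ ℓ * ρ m))) ∧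
    (∑ ℓ, ((∫ ω, (Y (J ω) ω ℓ / invMills t) ^ 2) - (∫ ω, Y (J ω) ω ℓ / invMills t) ^ 2))
        = (1 / (invMills t) ^ 2)
            * (Matrix.trace (A * Aᵀ) + (1 + t * invMills t - (invMills t) ^ 2) * ∑ ℓ, ρ ℓ ^ 2) := by
  classical
  set q : ℝ := gaussTail t with hqdef
  have hq : 0 < q := gaussTail_pos t
  set S : ℝ := invMills t with hSdef
  have hφS : stdGaussianPDF t = S * q := by
    rw [hSdef, invMills, ← hqdef]; field_simp
  have hS : 0 < S := by
    rw [hSdef, invMills]; exact div_pos (phi_pos t) hq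
  set γ : Measure ℝ := gaussianReal 0 1 with hγdef
  set γd : Measure (Fin d → ℝ) := Measure.pi fun _ : Fin d => gaussianReal 0 1 with hγddef
  set μ : Measure (ℝ × (Fin d → ℝ)) := γ.prod γd with hμdef
  set W : ℕ → Ω → ℝ × (Fin d → ℝ) := fun i ω => (X i ω, Z i ω) with hWdef
  have hWm : ∀ i, AEMeasurable (W i) ℙ := by
    intro i
    by_contra h
    have h0 := hlaw i
    rw [Measure.map_of_not_aemeasurable h] at h0
    exact (IsProbabilityMeasure.ne_zero μ) h0.symm
  set W' : ℕ → Ω → ℝ × (Fin d → ℝ) := fun i => (hWm i).mk (W i) with hW'def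
  have hW'm : ∀ i, Measurable (W' i) := fun i => (hWm i).measurable_mk
  have hWW' : ∀ i, W i =ᵐ[ℙ] W' i := fun i => (hWm i).ae_eq_mk
  have hlaw' : ∀ i, Measure.map (W' i) ℙ = μ := fun i => by
    rw [← Measure.map_congr (hWW' i)]; exact hlaw i
  set B : Set (ℝ × (Fin d → ℝ)) := Set.Ioi t ×ˢ (Set.univ : Set (Fin d → ℝ)) with hBdef
  have hB : MeasurableSet B := measurableSet_Ioi.prod MeasurableSet.univ
  have hJ' : ∀ᵐ ω ∂ℙ, W (J ω) ω ∈ B ∧ ∀ i < J ω, W i ω ∉ B := by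
    filter_upwards [hJ] with ω h
    exact ⟨⟨h.1, trivial⟩, fun i hi hmem => absurd (h.2 i hi) (not_le.2 hmem.1)⟩
  have hmap := stopped_law W μ hindep hWm hlaw W' hW'm hWW' B hB J hJmeas hJ'
  have hVm : Measurable (fun ω => W' (J ω) ω) := by
    have h1 : Measurable (fun p : Ω × ℕ => W' p.2 p.1) :=
      measurable_from_prod_countable_left (fun j => hW'm j)
    exact h1.comp (measurable_id.prodMk hJmeas)
  have hμB : μ B = ENNReal.ofReal q := by
    rw [hμdef, hBdef, Measure.prod_prod, measure_univ, mul_one, hγdef,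
      gauss_restrict_apply measurableSet_Ioi]
    rfl
  set η : Measure (ℝ × (Fin d → ℝ)) := (γ.restrict (Set.Ioi t)).prod γd with hηdef
  have hres : μ.restrict B = η := by
    rw [hηdef, hμdef, hBdef, Measure.restrict_prod_eq_prod_univ]
  have htrans : ∀ g : ℝ × (Fin d → ℝ) → ℝ, Measurable g →
      ∫ ω, g (W' (J ω) ω) ∂ℙ = q⁻¹ * ∫ p, g p ∂η := by
    intro g hg
    rw [← integral_map hVm.aemeasurable hg.aestronglyMeasurable, hmap, ← hres, hμB,
      integral_smul_measure, ENNReal.toReal_inv, ENNReal.toReal_ofReal hq.le, smul_eq_mul]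
  -- moments over η
  have hγt1 : Integrable (fun x : ℝ => x) (γ.restrict (Set.Ioi t)) :=
    (integrable_gauss_restrict _ measurableSet_Ioi _).2 (intOn_xphi t)
  have hγt2 : Integrable (fun x : ℝ => x ^ 2) (γ.restrict (Set.Ioi t)) :=
    (integrable_gauss_restrict _ measurableSet_Ioi _).2 (intOn_x2phi t)
  have hE1 : (∫ p, p.1 ∂η) = S * q := by
    rw [show (fun p : ℝ × (Fin d → ℝ) => p.1)
        = fun p : ℝ × (Fin d → ℝ) => (fun x => x) p.1 * (fun _ => (1:ℝ)) p.2 from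
      funext fun p => by simp]
    rw [hηdef, integral_prod_mul (fun x : ℝ => x) (fun _ => (1:ℝ)),
      integral_gauss_restrict _ measurableSet_Ioi, L1',
      integral_const, probReal_univ, one_smul, mul_one, hφS]
  have hE3 : (∫ p, p.1 ^ 2 ∂η) = t * (S * q) + q := by
    rw [show (fun p : ℝ × (Fin d → ℝ) => p.1 ^ 2)
        = fun p : ℝ × (Fin d → ℝ) => (fun x => x ^ 2) p.1 * (fun _ => (1:ℝ)) p.2 from
      funext fun p => by simp]
    rw [hηdef, integral_prod_mul (fun x : ℝ => x ^ 2) (fun _ => (1:ℝ)),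
      integral_gauss_restrict _ measurableSet_Ioi, L2',
      integral_const, probReal_univ, one_smul, mul_one, hφS]
  have hE2 : ∀ k, (∫ p : ℝ × (Fin d → ℝ), p.2 k ∂η) = 0 := by
    intro k
    rw [show (fun p : ℝ × (Fin d → ℝ) => p.2 k)
        = fun p : ℝ × (Fin d → ℝ) => (fun _ => (1:ℝ)) p.1 * (fun z : Fin d → ℝ => z k) p.2 from
      funext fun p => by simp]
    rw [hηdef, integral_prod_mul (fun _ : ℝ => (1:ℝ)) (fun z : Fin d → ℝ => z k),
      hγddef, u0, mul_zero]
  have hE4 : ∀ k, (∫ p : ℝ × (Fin d → ℝ), p.1 * p.2 k ∂η) = 0 := by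
    intro k
    rw [show (fun p : ℝ × (Fin d → ℝ) => p.1 * p.2 k)
        = fun p : ℝ × (Fin d → ℝ) => (fun x => x) p.1 * (fun z : Fin d → ℝ => z k) p.2 from
      funext fun p => by simp]
    rw [hηdef, integral_prod_mul (fun x : ℝ => x) (fun z : Fin d → ℝ => z k),
      hγddef, u0, mul_zero]
  have hE5 : ∀ k l, (∫ p : ℝ × (Fin d → ℝ), p.2 k * p.2 l ∂η)
      = q * (if k = l then 1 else 0) := by
    intro k l
    rw [show (fun p : ℝ × (Fin d → ℝ) => p.2 k * p.2 l)
        = fun p : ℝ × (Fin d → ℝ) =>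
          (fun _ => (1:ℝ)) p.1 * (fun z : Fin d → ℝ => z k * z l) p.2 from
      funext fun p => by simp]
    rw [hηdef, integral_prod_mul (fun _ : ℝ => (1:ℝ)) (fun z : Fin d → ℝ => z k * z l),
      hγddef, u2, integral_gauss_restrict _ measurableSet_Ioi, L0']
  -- integrability over η
  have hI1 : Integrable (fun p : ℝ × (Fin d → ℝ) => p.1) η := by
    have := hγt1.mul_prod (integrable_const (1:ℝ) (μ := γd))
    rw [hηdef]; simpa using this
  have hI3 : Integrable (fun p : ℝ × (Fin d → ℝ) => p.1 ^ 2) η := by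
    have := hγt2.mul_prod (integrable_const (1:ℝ) (μ := γd))
    rw [hηdef]; simpa using this
  have hI2 : ∀ k, Integrable (fun p : ℝ × (Fin d → ℝ) => p.2 k) η := by
    intro k
    have := (integrable_const (1:ℝ) (μ := γ.restrict (Set.Ioi t))).mul_prod (uInt k)
    rw [hηdef]; simpa using this
  have hI4 : ∀ k, Integrable (fun p : ℝ × (Fin d → ℝ) => p.1 * p.2 k) η := by
    intro k
    have := hγt1.mul_prod (uInt k)
    rw [hηdef]; exact this
  have hI5 : ∀ k l, Integrable (fun p : ℝ × (Fin d → ℝ) => p.2 k * p.2 l) η := by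
    intro k l
    have := (integrable_const (1:ℝ) (μ := γ.restrict (Set.Ioi t))).mul_prod (uInt2 k l)
    rw [hηdef]; simpa using this
  -- the linear functionals
  set g1 : Fin d → ℝ × (Fin d → ℝ) → ℝ :=
    fun ℓ p => ρ ℓ * p.1 + ∑ k, A ℓ k * p.2 k with hg1def
  have hg1meas : ∀ ℓ, Measurable (g1 ℓ) := by
    intro ℓ
    apply Measurable.add
    · exact measurable_fst.const_mul _
    · exact Finset.measurable_sum _ fun k _ =>
        ((measurable_pi_apply k).comp measurable_snd).const_mul _
  have hSBint : ∀ m, Integrable (fun p : ℝ × (Fin d → ℝ) => ∑ k, A m k * p.2 k) η :=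
    fun m => integrable_finset_sum _ fun k _ => (hI2 k).const_mul _
  have hg1int : ∀ ℓ, Integrable (g1 ℓ) η :=
    fun ℓ => (hI1.const_mul _).add (hSBint ℓ)
  have hSBE : ∀ m, (∫ p : ℝ × (Fin d → ℝ), ∑ k, A m k * p.2 k ∂η) = 0 := by
    intro m
    rw [integral_finset_sum _ fun k _ => (hI2 k).const_mul _]
    simp [integral_const_mul, hE2]
  have hEg1 : ∀ ℓ, (∫ p, g1 ℓ p ∂η) = ρ ℓ * (S * q) := by
    intro ℓ
    rw [hg1def]
    rw [integral_add (hI1.const_mul _) (hSBint ℓ), integral_const_mul, hE1, hSBE, add_zero]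
  -- first moment of the estimator
  have hYae : ∀ ℓ, (fun ω => Y (J ω) ω ℓ) =ᵐ[ℙ] fun ω => g1 ℓ (W' (J ω) ω) := by
    intro ℓ
    filter_upwards [ae_all_iff.2 hWW'] with ω hω
    rw [hY (J ω) ω ℓ, hg1def, ← hω (J ω)]
    simp [hWdef, Matrix.mulVec, dotProduct]
  have hB1 : ∀ ℓ, (∫ ω, Y (J ω) ω ℓ) = ρ ℓ * S := by
    intro ℓ
    rw [integral_congr_ae (hYae ℓ), htrans _ (hg1meas ℓ), hEg1]
    field_simp
  have part1 : ∀ ℓ, (∫ ω, Y (J ω) ω ℓ / S) = ρ ℓ := by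
    intro ℓ
    rw [integral_div, hB1, mul_div_assoc, div_self hS.ne', mul_one]
  -- second moments
  have hxSBint : ∀ m, Integrable (fun p : ℝ × (Fin d → ℝ) => p.1 * ∑ k, A m k * p.2 k) η := by
    intro m
    have heq : (fun p : ℝ × (Fin d → ℝ) => p.1 * ∑ k, A m k * p.2 k)
        = fun p : ℝ × (Fin d → ℝ) => ∑ k, A m k * (p.1 * p.2 k) := funext fun p => by
      rw [Finset.mul_sum]; exact Finset.sum_congr rfl fun k _ => by ring
    rw [heq]
    exact integrable_finset_sum _ fun k _ => (hI4 k).const_mul _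
  have hxSBE : ∀ m, (∫ p : ℝ × (Fin d → ℝ), p.1 * ∑ k, A m k * p.2 k ∂η) = 0 := by
    intro m
    have heq : (fun p : ℝ × (Fin d → ℝ) => p.1 * ∑ k, A m k * p.2 k)
        = fun p : ℝ × (Fin d → ℝ) => ∑ k, A m k * (p.1 * p.2 k) := funext fun p => by
      rw [Finset.mul_sum]; exact Finset.sum_congr rfl fun k _ => by ring
    rw [heq, integral_finset_sum _ fun k _ => (hI4 k).const_mul _]
    simp [integral_const_mul, hE4]
  have hSSeq : ∀ ℓ m, (fun p : ℝ × (Fin d → ℝ) =>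
        (∑ k, A ℓ k * p.2 k) * ∑ k, A m k * p.2 k)
      = fun p : ℝ × (Fin d → ℝ) => ∑ k, ∑ l, (A ℓ k * A m l) * (p.2 k * p.2 l) := by
    intro ℓ m
    funext p
    rw [Finset.sum_mul_sum]
    exact Finset.sum_congr rfl fun k _ => Finset.sum_congr rfl fun l _ => by ring
  have hSSint : ∀ ℓ m, Integrable (fun p : ℝ × (Fin d → ℝ) =>
      (∑ k, A ℓ k * p.2 k) * ∑ k, A m k * p.2 k) η := by
    intro ℓ m
    rw [hSSeq]
    exact integrable_finset_sum _ fun k _ =>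
      integrable_finset_sum _ fun l _ => (hI5 k l).const_mul _
  have hSSE : ∀ ℓ m, (∫ p : ℝ × (Fin d → ℝ),
      (∑ k, A ℓ k * p.2 k) * ∑ k, A m k * p.2 k ∂η) = q * ∑ k, A ℓ k * A m k := by
    intro ℓ m
    rw [hSSeq, integral_finset_sum _ fun k _ =>
      integrable_finset_sum _ fun l _ => (hI5 k l).const_mul _]
    rw [Finset.sum_congr rfl fun k _ => integral_finset_sum _ fun l _ => (hI5 k l).const_mul _]
    rw [Finset.sum_congr rfl fun k (_ : k ∈ Finset.univ) => Finset.sum_congr rfl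
      fun l (_ : l ∈ Finset.univ) => by rw [integral_const_mul, hE5 k l]]
    rw [Finset.mul_sum]
    exact Finset.sum_congr rfl fun k _ => by
      rw [Finset.sum_eq_single k (fun l _ hlk => by simp [Ne.symm hlk]) (by simp)]
      simp; ring
  have hg2eq : ∀ ℓ m, (fun p => g1 ℓ p * g1 m p)
      = fun p : ℝ × (Fin d → ℝ) =>
        (ρ ℓ * ρ m) * p.1 ^ 2
        + ((ρ ℓ * (p.1 * ∑ k, A m k * p.2 k)) + (ρ m * (p.1 * ∑ k, A ℓ k * p.2 k)))
        + (∑ k, A ℓ k * p.2 k) * ∑ k, A m k * p.2 k := by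
    intro ℓ m
    funext p
    rw [hg1def]
    ring
  have hEg2 : ∀ ℓ m, (∫ p, g1 ℓ p * g1 m p ∂η)
      = (ρ ℓ * ρ m) * (t * (S * q) + q) + q * ∑ k, A ℓ k * A m k := by
    intro ℓ m
    rw [hg2eq]
    have hb : Integrable (fun p : ℝ × (Fin d → ℝ) =>
        ρ ℓ * (p.1 * ∑ k, A m k * p.2 k) + ρ m * (p.1 * ∑ k, A ℓ k * p.2 k)) η :=
      ((hxSBint m).const_mul _).add ((hxSBint ℓ).const_mul _)
    have hab : Integrable (fun p : ℝ × (Fin d → ℝ) =>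
        (ρ ℓ * ρ m) * p.1 ^ 2
        + (ρ ℓ * (p.1 * ∑ k, A m k * p.2 k) + ρ m * (p.1 * ∑ k, A ℓ k * p.2 k))) η :=
      (hI3.const_mul _).add hb
    rw [integral_add hab (hSSint ℓ m), integral_add (hI3.const_mul _) hb,
      integral_add ((hxSBint m).const_mul _) ((hxSBint ℓ).const_mul _)]
    rw [integral_const_mul, integral_const_mul, integral_const_mul, hE3, hxSBE, hxSBE,
      hSSE]
    ring
  have hB2 : ∀ ℓ m, (∫ ω, Y (J ω) ω ℓ * Y (J ω) ω m)
      = (ρ ℓ * ρ m) * (1 + t * S) * S⁻¹ * S⁻¹ * S ^ 2 + ∑ k, A ℓ k * A m k := by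
    intro ℓ m
    have hae : (fun ω => Y (J ω) ω ℓ * Y (J ω) ω m)
        =ᵐ[ℙ] fun ω => g1 ℓ (W' (J ω) ω) * g1 m (W' (J ω) ω) := (hYae ℓ).mul (hYae m)
    rw [integral_congr_ae hae, htrans (fun p => g1 ℓ p * g1 m p) ((hg1meas ℓ).mul (hg1meas m)), hEg2]
    field_simp
    ring
  have part2 : ∀ ℓ m, (∫ ω, (Y (J ω) ω ℓ / S) * (Y (J ω) ω m / S))
          - (∫ ω, Y (J ω) ω ℓ / S) * (∫ ω, Y (J ω) ω m / S)
        = (1 / S ^ 2) * ((A * Aᵀ) ℓ m + (1 + t * S - S ^ 2) * (ρ ℓ * ρ m)) := by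
    intro ℓ m
    have hdiv : (fun ω => (Y (J ω) ω ℓ / S) * (Y (J ω) ω m / S))
        = fun ω => (Y (J ω) ω ℓ * Y (J ω) ω m) / S ^ 2 := funext fun ω => by
      rw [div_mul_div_comm, pow_two]
    rw [hdiv, integral_div, hB2, part1, part1]
    rw [Matrix.mul_apply]
    simp only [Matrix.transpose_apply]
    field_simp
    ring
  refine ⟨part1, part2, ?_⟩
  have hsq : ∀ ℓ, (∫ ω, (Y (J ω) ω ℓ / S) ^ 2) = ∫ ω, (Y (J ω) ω ℓ / S) * (Y (J ω) ω ℓ / S) := by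
    intro ℓ
    exact integral_congr_ae (Filter.Eventually.of_forall fun ω => by simp only [pow_two])
  have hsum : ∀ ℓ : Fin d, (∫ ω, (Y (J ω) ω ℓ / S) ^ 2) - (∫ ω, Y (J ω) ω ℓ / S) ^ 2
      = (1 / S ^ 2) * ((A * Aᵀ) ℓ ℓ + (1 + t * S - S ^ 2) * (ρ ℓ * ρ ℓ)) := fun ℓ => by
    rw [hsq ℓ, pow_two (∫ ω, Y (J ω) ω ℓ / S)]
    exact part2 ℓ ℓ
  rw [Finset.sum_congr rfl fun ℓ (_ : ℓ ∈ Finset.univ) => hsum ℓ]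
  rw [← Finset.mul_sum, Finset.sum_add_distrib, ← Finset.mul_sum]
  simp [Matrix.trace, Matrix.diag, pow_two]
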